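/- Every connected indecomposable finite Cartan graph contains a point X whose Cartan matrix A^X is of finite type. -/

import Mathlib

open Classical

/-- A semi-Cartan graph: a set of points `X`, involutive reflection maps
`r i : X → X`, and a generalized Cartan matrix `A x` at every point `x`,
compatible with the reflections. -/
structure SemiCartanGraph (I : Type*) [Fintype I] [DecidableEq I] where
  X : Type*
  nonemptyX : Nonempty X
  r : I → X → X
  A : X → Matrix I I ℤ
  diag : ∀ x i, A x i i = 2
  offdiag : ∀ x i j, i ≠ j → A x i j ≤ 0
  zeroSymm : ∀ x i j, A x i j = 0 → A x j i = 0
  r_invol : ∀ i x, r i (r i x) = x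
  A_compat : ∀ i x j, A (r i x) i j = A x i j

namespace SemiCartanGraph

variable {I : Type*} [Fintype I] [DecidableEq I]

/-- The reflection `s_i^x` acting on `ℤ^I`: `s_i^x (α_j) = α_j - a^x_{ij} α_i`. -/
def reflVec (C : SemiCartanGraph I) (i : I) (x : C.X) (v : I → ℤ) : I → ℤ :=
  fun k => v k - (if k = i then ∑ j, C.A x i j * v j else 0)

/-- The real roots of `C` at a point: images of the standard basis vectors
under compositions of reflections along paths ending at the given point. -/
inductive IsRealRoot (C : SemiCartanGraph I) : C.X → (I → ℤ) → Prop
  | basis (x : C.X) (i : I) : IsRealRoot C x (Pi.single i (1 : ℤ))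
  | step (x : C.X) (i : I) (v : I → ℤ) :
      IsRealRoot C x v → IsRealRoot C (C.r i x) (C.reflVec i x v)

/-- An integral generalized Cartan matrix is of finite type if it satisfies
Kac's condition (Fin) (over `ℝ`). -/
def IsFiniteType (A : Matrix I I ℤ) : Prop :=
  (A.map (Int.cast : ℤ → ℝ)).det ≠ 0 ∧
    (∃ u : I → ℝ, (∀ i, 0 < u i) ∧
      ∀ i, 0 < (A.map (Int.cast : ℤ → ℝ)).mulVec u i) ∧
    ∀ v : I → ℝ, (∀ i, 0 ≤ (A.map (Int.cast : ℤ → ℝ)).mulVec v i) →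
      (∀ i, 0 < v i) ∨ v = 0

/-- Indecomposability of a generalized Cartan matrix. -/
def IsIndecMatrix (A : Matrix I I ℤ) : Prop :=
  ¬ ∃ s : Set I, s.Nonempty ∧ sᶜ.Nonempty ∧ ∀ i ∈ s, ∀ j ∈ sᶜ, A i j = 0

variable (C : SemiCartanGraph I)

lemma reflVec_apply (i : I) (x : C.X) (v : I → ℤ) (k : I) :
    C.reflVec i x v k = v k - (if k = i then ∑ j, C.A x i j * v j else 0) := rfl

lemma refl_refl (i : I) (x : C.X) (v : I → ℤ) :
    C.reflVec i (C.r i x) (C.reflVec i x v) = v := by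
  funext k
  have hsum : ∑ j, C.A (C.r i x) i j * C.reflVec i x v j
      = - ∑ j, C.A x i j * v j := by
    have : ∀ j, C.A (C.r i x) i j * C.reflVec i x v j
        = C.A x i j * v j - (if j = i then (2:ℤ) * ∑ m, C.A x i m * v m else 0) := by
      intro j
      rw [C.A_compat, reflVec_apply]
      by_cases hj : j = i
      · subst hj; rw [C.diag]; simp; ring
      · simp [hj]
    rw [Finset.sum_congr rfl (fun j _ => this j), Finset.sum_sub_distrib]
    simp [Finset.sum_ite_eq']
    ring
  rw [reflVec_apply, hsum, reflVec_apply]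
  by_cases hk : k = i <;> simp [hk]

lemma refl_refl' (i : I) (x : C.X) (v : I → ℤ) :
    C.reflVec i x (C.reflVec i (C.r i x) v) = v := by
  have := C.refl_refl i (C.r i x) v
  rwa [C.r_invol] at this

lemma reflVec_injective (i : I) (x : C.X) : Function.Injective (C.reflVec i x) :=
  Function.LeftInverse.injective (g := C.reflVec i (C.r i x)) (C.refl_refl i x)

/-- `reflVec` as a linear map. -/
def reflLin (i : I) (x : C.X) : (I → ℤ) →ₗ[ℤ] (I → ℤ) where
  toFun := C.reflVec i x
  map_add' a b := by
    funext k
    simp only [reflVec_apply, Pi.add_apply, mul_add, Finset.sum_add_distrib]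
    by_cases hk : k = i <;> simp [hk] <;> ring
  map_smul' c a := by
    funext k
    simp only [reflVec_apply, Pi.smul_apply, smul_eq_mul, RingHom.id_apply]
    have : ∀ j, C.A x i j * (c * a j) = c * (C.A x i j * a j) := fun j => by ring
    rw [Finset.sum_congr rfl (fun j _ => this j), ← Finset.mul_sum]
    by_cases hk : k = i <;> simp [hk] <;> ring

lemma reflVec_neg (i : I) (x : C.X) (v : I → ℤ) :
    C.reflVec i x (-v) = -(C.reflVec i x v) := by
  have := (C.reflLin i x).map_neg v
  exact this

lemma reflVec_sub (i : I) (x : C.X) (a b : I → ℤ) :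
    C.reflVec i x (a - b) = C.reflVec i x a - C.reflVec i x b :=
  (C.reflLin i x).map_sub a b

lemma reflVec_single_self (i : I) (x : C.X) :
    C.reflVec i x (Pi.single i 1) = -(Pi.single i (1:ℤ)) := by
  funext k
  rw [reflVec_apply]
  have hsum : ∑ m, C.A x i m * (Pi.single i (1:ℤ) : I → ℤ) m = 2 := by
    simp [Pi.single_apply, mul_ite, Finset.sum_ite_eq']
    exact C.diag _ _
  rw [hsum]
  by_cases hk : k = i <;> simp [hk, Pi.single_apply]

lemma root_neg {x : C.X} {v : I → ℤ} (h : C.IsRealRoot x v) : C.IsRealRoot x (-v) := by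
  induction h with
  | basis y j =>
      have h1 : C.IsRealRoot (C.r j y) (Pi.single j (1:ℤ)) := IsRealRoot.basis _ _
      have h2 := IsRealRoot.step (C := C) (C.r j y) j _ h1
      rw [C.r_invol] at h2
      have : C.reflVec j (C.r j y) (Pi.single j (1:ℤ)) = -Pi.single j (1:ℤ) := by
        funext k
        rw [reflVec_apply]
        have hsum : ∑ m, C.A (C.r j y) j m * (Pi.single j (1:ℤ) : I → ℤ) m = 2 := by
          simp [Pi.single_apply, mul_ite, Finset.sum_ite_eq']
          exact C.diag _ _
        rw [hsum]
        by_cases hk : k = j <;> simp [hk, Pi.single_apply]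
      rwa [this] at h2
  | step y j w hw ih =>
      have := IsRealRoot.step (C := C) y j _ ih
      rwa [C.reflVec_neg] at this

lemma root_back {x : C.X} {i : I} {v : I → ℤ} (h : C.IsRealRoot (C.r i x) v) :
    C.IsRealRoot x (C.reflVec i (C.r i x) v) := by
  have := IsRealRoot.step (C := C) (C.r i x) i v h
  rwa [C.r_invol] at this

lemma root_primitive {x : C.X} {v : I → ℤ} (h : C.IsRealRoot x v) :
    ∀ d : ℤ, (∀ k, d ∣ v k) → IsUnit d := by
  induction h with
  | basis y j =>
      intro d hd
      have := hd j
      simp [Pi.single_apply] at this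
      exact isUnit_of_dvd_one this
  | step y j w hw ih =>
      intro d hd
      apply ih
      intro k
      have hrec : w = C.reflVec j (C.r j y) (C.reflVec j y w) := (C.refl_refl j y w).symm
      rw [hrec, reflVec_apply]
      apply dvd_sub
      · exact hd k
      · by_cases hk : k = j
        · simp only [hk, if_pos rfl]
          exact Finset.dvd_sum (fun m _ => Dvd.dvd.mul_left (hd m) _)
        · simp [hk]

lemma root_ne_zero {x : C.X} {v : I → ℤ} (h : C.IsRealRoot x v) : v ≠ 0 := by
  intro hv
  have := C.root_primitive h 0 (by intro k; rw [hv]; simp)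
  simp at this

section PM

variable {C}
variable (hpm : ∀ (x : C.X) (v : I → ℤ), C.IsRealRoot x v →
      (∀ i, 0 ≤ v i) ∨ (∀ i, v i ≤ 0))

include hpm

lemma root_pos_of_coord {x : C.X} {v : I → ℤ} (h : C.IsRealRoot x v)
    {k : I} (hk : 0 < v k) : ∀ m, 0 ≤ v m := by
  rcases hpm x v h with h1 | h1
  · exact h1
  · exact absurd (h1 k) (by omega)

/-- Lemma A: the reflection of a positive root other than `α_i` is positive. -/
lemma lemA {x : C.X} {i : I} {v : I → ℤ} (h : C.IsRealRoot x v)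
    (hv : ∀ k, 0 ≤ v k) (hne : v ≠ Pi.single i 1) :
    ∀ k, 0 ≤ C.reflVec i x v k := by
  by_cases hex : ∃ k, k ≠ i ∧ 0 < v k
  · obtain ⟨k, hki, hk⟩ := hex
    have hroot : C.IsRealRoot (C.r i x) (C.reflVec i x v) := IsRealRoot.step _ _ _ h
    have hwk : 0 < C.reflVec i x v k := by rw [C.reflVec_apply]; simp [hki]; omega
    exact root_pos_of_coord hpm hroot hwk
  · exfalso
    push_neg at hex
    have hz : ∀ k, k ≠ i → v k = 0 := fun k hk => le_antisymm (hex k hk) (hv k)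
    have hdvd : ∀ k, v i ∣ v k := by
      intro k
      by_cases hk : k = i
      · subst hk; exact dvd_rfl
      · rw [hz k hk]; exact dvd_zero _
    have hunit := C.root_primitive h (v i) hdvd
    have h1 : v i = 1 := by
      rcases Int.isUnit_iff.mp hunit with h1 | h1
      · exact h1
      · exact absurd (hv i) (by omega)
    apply hne
    funext k
    by_cases hk : k = i
    · subst hk; simp [h1]
    · simp [hz k hk, Pi.single_apply, hk]

/-- Two-step lemma: if `a^x_{ij} < 0` then `a^{r_i x}_{ji} < 0`. -/
lemma twostep {x : C.X} {i j : I} (hij : C.A x i j < 0) :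
    C.A (C.r i x) j i < 0 := by
  have hne : i ≠ j := by
    intro hh; subst hh; rw [C.diag] at hij; omega
  set y := C.r i x with hy
  set a := C.A x i j with ha
  set b := C.A y j i with hb
  set v : I → ℤ := fun k => (Pi.single j (1:ℤ) : I → ℤ) k - (if k = i then a else 0)
    with hvdef
  have hv : C.IsRealRoot y v := by
    have h0 : C.IsRealRoot y (C.reflVec i x (Pi.single j 1)) :=
      IsRealRoot.step _ _ _ (IsRealRoot.basis x j)
    have hvfun : C.reflVec i x (Pi.single j 1) = v := by
      funext k
      rw [C.reflVec_apply]
      have : ∑ m, C.A x i m * (Pi.single j (1:ℤ) : I → ℤ) m = a := by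
        simp [Pi.single_apply, mul_ite, Finset.sum_ite_eq']
        exact ha.symm
      rw [this]
    rwa [hvfun] at h0
  have hw : C.IsRealRoot (C.r j y) (C.reflVec j y v) := IsRealRoot.step _ _ _ hv
  have hwsum : ∑ m, C.A y j m * v m = 2 - b * a := by
    simp only [hvdef, mul_sub, Finset.sum_sub_distrib, Pi.single_apply, mul_ite,
      mul_one, mul_zero, Finset.sum_ite_eq', Finset.mem_univ, if_pos, if_true]
    rw [C.diag]
  have hwi : 0 < C.reflVec j y v i := by
    rw [C.reflVec_apply]
    have h1 : ¬ (i = j) := hne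
    simp [hvdef, h1, Pi.single_apply]
    omega
  have hpos := root_pos_of_coord hpm hw hwi
  have hwj := hpos j
  rw [C.reflVec_apply, hwsum] at hwj
  have h1 : ¬ (j = i) := fun hh => hne hh.symm
  simp [hvdef, h1, Pi.single_apply] at hwj
  -- hwj : 0 ≤ 1 - (2 - b*a)  i.e.  b*a ≥ 1
  nlinarith [hwj]

/-- Splitting invariance: a decomposition of `A x` is also one of `A (r_k x)`. -/
lemma split_invariant {x : C.X} (s : Set I)
    (hs : ∀ p ∈ s, ∀ q, q ∉ s → C.A x p q = 0) (k : I) :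
    ∀ p ∈ s, ∀ q, q ∉ s → C.A (C.r k x) p q = 0 := by
  have hs' : ∀ p ∈ s, ∀ q, q ∉ s → C.A x q p = 0 :=
    fun p hp q hq => C.zeroSymm x p q (hs p hp q hq)
  intro p hp q hq
  by_contra hne0
  set y := C.r k x with hy
  have hxy : C.r k y = x := by rw [hy, C.r_invol]
  have hpq : p ≠ q := fun hh => hq (hh ▸ hp)
  have hlt : C.A y p q < 0 := lt_of_le_of_ne (C.offdiag y p q hpq) hne0
  by_cases hkp : k = p
  · have := twostep hpm hlt
    rw [← hkp, hxy] at this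
    have h0 := hs' p hp q hq
    rw [← hkp] at h0
    omega
  by_cases hkq : k = q
  · have hqp : C.A y q p < 0 := by
      have h0 : C.A y q p ≠ 0 := fun hh => hne0 (C.zeroSymm y q p hh)
      exact lt_of_le_of_ne (C.offdiag y q p (Ne.symm hpq)) h0
    have := twostep hpm hqp
    rw [← hkq, hxy] at this
    have h0 := hs p hp q hq
    rw [← hkq] at h0
    omega
  -- main case : k ∉ {p, q}
  set c0 := C.A y p q with hc0
  set w : I → ℤ := fun m => (Pi.single q (1:ℤ) : I → ℤ) m - (if m = p then c0 else 0)
    with hwdef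
  have hwroot : C.IsRealRoot y w := by
    have h0 := C.root_back (x := y) (i := p) (v := Pi.single q 1)
      (IsRealRoot.basis (C.r p y) q)
    have hfun : C.reflVec p (C.r p y) (Pi.single q 1) = w := by
      funext m
      rw [C.reflVec_apply]
      have : ∑ j, C.A (C.r p y) p j * (Pi.single q (1:ℤ) : I → ℤ) j = c0 := by
        rw [hc0, ← C.A_compat p y q]
        simp [Pi.single_apply, mul_ite, Finset.sum_ite_eq']
      rw [this]
    rwa [hfun] at h0
  have hwpos : ∀ m, 0 ≤ w m := by
    intro m
    rw [hwdef]
    simp only [Pi.single_apply]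
    by_cases hmp : m = p
    · subst hmp
      have : ¬ (m = q) := hpq
      simp [this]
      omega
    · simp [hmp]
      split <;> omega
  have hwne : w ≠ Pi.single k 1 := by
    intro hh
    have := congrFun hh q
    rw [hwdef] at this
    have h1 : ¬ (q = p) := Ne.symm hpq
    have h2 : ¬ (q = k) := fun hh2 => hkq hh2.symm
    simp [h1, h2, Pi.single_apply] at this
  set v := C.reflVec k y w with hvdef
  have hvroot : C.IsRealRoot x v := by
    have := IsRealRoot.step (C := C) y k w hwroot
    rwa [hxy] at this
  have hvpos : ∀ m, 0 ≤ v m := lemA hpm hwroot hwpos hwne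
  have hvcoord : ∀ m, m ≠ k → v m = w m := by
    intro m hm
    rw [hvdef, C.reflVec_apply]
    simp [hm]
  have hvp : 0 < v p := by
    rw [hvcoord p (fun hh => hkp hh.symm), hwdef]
    have : ¬ (p = q) := hpq
    simp [this, Pi.single_apply]
    omega
  have hvq : v q = 1 := by
    rw [hvcoord q (fun hh => hkq hh.symm), hwdef]
    have h1 : ¬ (q = p) := Ne.symm hpq
    simp [h1, Pi.single_apply]
  -- choose the index t ∈ {p,q} on the side opposite to k
  set c := ∑ j, C.A y k j * w j with hc
  have hvfun : v = fun m => (Pi.single q (1:ℤ) : I → ℤ) m - (if m = p then c0 else 0)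
      - (if m = k then c else 0) := by
    funext m
    rw [hvdef, C.reflVec_apply, ← hc, hwdef]
  have hsum : ∀ t : I, ∑ m, C.A x t m * v m
      = C.A x t q - c0 * C.A x t p - c * C.A x t k := by
    intro t
    rw [hvfun]
    simp only [mul_sub, Finset.sum_sub_distrib, Pi.single_apply, mul_ite,
      mul_one, mul_zero, Finset.sum_ite_eq', Finset.mem_univ, if_pos, if_true]
    ring
  by_cases hks : k ∈ s
  · -- t = q : then p, k ∈ s and q ∉ s
    have hsq : ∑ m, C.A x q m * v m = 2 := by
      rw [hsum q, C.diag, hs' p hp q hq, hs' k hks q hq]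
      ring
    have hz : C.IsRealRoot (C.r q x) (C.reflVec q x v) := IsRealRoot.step _ _ _ hvroot
    have hzq : C.reflVec q x v q < 0 := by
      rw [C.reflVec_apply, hsq]
      simp [hvq]
    have hzp : 0 < C.reflVec q x v p := by
      rw [C.reflVec_apply]
      simp [hpq]
      omega
    have := root_pos_of_coord hpm hz hzp q
    omega
  · -- t = p : then q, k ∉ s and p ∈ s
    have hsp : ∑ m, C.A x p m * v m = -2 * c0 := by
      rw [hsum p, C.diag, hs p hp q hq, hs p hp k hks]
      ring
    have hz : C.IsRealRoot (C.r p x) (C.reflVec p x v) := IsRealRoot.step _ _ _ hvroot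
    have hzp : C.reflVec p x v p < 0 := by
      rw [C.reflVec_apply]
      simp
      rw [hsp]
      have hvp2 : v p = -c0 := by
        rw [hvcoord p (fun hh => hkp hh.symm), hwdef]
        have : ¬ (p = q) := hpq
        simp [this, Pi.single_apply]
      rw [hvp2]
      omega
    have hzq : 0 < C.reflVec p x v q := by
      rw [C.reflVec_apply]
      have h1 : ¬ (q = p) := Ne.symm hpq
      simp [h1]
      omega
    have := root_pos_of_coord hpm hz hzq p
    omega

end PM

section U

variable (hfin : ∀ x : C.X, {v : I → ℤ | C.IsRealRoot x v}.Finite)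

/-- The finite set of positive roots at a point. -/
noncomputable def posF (x : C.X) : Finset (I → ℤ) :=
  (Set.Finite.subset (hfin x) (fun v hv => hv.1) :
    ({v : I → ℤ | C.IsRealRoot x v ∧ ∀ k, 0 ≤ v k}).Finite).toFinset

lemma mem_posF {x : C.X} {v : I → ℤ} :
    v ∈ C.posF hfin x ↔ C.IsRealRoot x v ∧ ∀ k, 0 ≤ v k := by
  simp [posF, Set.Finite.mem_toFinset]

lemma single_mem_posF (x : C.X) (i : I) : Pi.single i 1 ∈ C.posF hfin x := by
  rw [mem_posF]
  refine ⟨IsRealRoot.basis x i, fun k => ?_⟩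
  by_cases hk : k = i <;> simp [hk, Pi.single_apply]

/-- Sum of positive roots at a point. -/
noncomputable def uvec (x : C.X) : I → ℤ := ∑ v ∈ C.posF hfin x, v

lemma uvec_pos (x : C.X) (k : I) : 1 ≤ C.uvec hfin x k := by
  have h0 : C.uvec hfin x k = ∑ v ∈ C.posF hfin x, v k := by
    rw [uvec, Finset.sum_apply]
  rw [h0]
  have h1 := Finset.single_le_sum (f := fun (v : I → ℤ) => v k)
    (fun v hv => ((C.mem_posF hfin).mp hv).2 k) (C.single_mem_posF hfin x k)
  simpa using h1

variable (hpm : ∀ (x : C.X) (v : I → ℤ), C.IsRealRoot x v →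
      (∀ i, 0 ≤ v i) ∨ (∀ i, v i ≤ 0))

include hpm

lemma posF_step (x : C.X) (i : I) :
    C.posF hfin (C.r i x)
      = insert (Pi.single i 1)
          (((C.posF hfin x).erase (Pi.single i 1)).image (C.reflVec i x)) := by
  set y := C.r i x with hy
  ext w
  simp only [Finset.mem_insert, Finset.mem_image, Finset.mem_erase, mem_posF]
  constructor
  · rintro ⟨hroot, hposw⟩
    by_cases hw : w = Pi.single i 1
    · exact Or.inl hw
    · refine Or.inr ⟨C.reflVec i y w, ⟨?_, ?_, ?_⟩, ?_⟩
      · -- ≠ single i 1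
        intro hh
        have hw2 : w = C.reflVec i x (Pi.single i 1) := by
          rw [← hh, C.refl_refl']
        rw [C.reflVec_single_self] at hw2
        have := hposw i
        rw [hw2] at this
        simp [Pi.single_apply] at this
      · exact C.root_back hroot
      · exact lemA hpm hroot hposw hw
      · exact C.refl_refl' i x w
  · rintro (hw | ⟨v, ⟨hvne, hvroot, hvpos⟩, hvw⟩)
    · subst hw
      exact ⟨IsRealRoot.basis y i, fun k => by
        by_cases hk : k = i <;> simp [hk, Pi.single_apply]⟩
    · subst hvw
      exact ⟨IsRealRoot.step x i v hvroot, lemA hpm hvroot hvpos hvne⟩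

lemma uvec_step (x : C.X) (i : I) :
    C.uvec hfin (C.r i x)
      = C.reflVec i x (C.uvec hfin x) + Pi.single i 1 + Pi.single i 1 := by
  have hstep := C.posF_step hfin hpm x i
  have hnotmem : Pi.single i (1:ℤ) ∉
      ((C.posF hfin x).erase (Pi.single i 1)).image (C.reflVec i x) := by
    intro hmem
    obtain ⟨v, hv, hveq⟩ := Finset.mem_image.mp hmem
    have hv2 : v = C.reflVec i (C.r i x) (Pi.single i 1) := by
      rw [← hveq, C.refl_refl]
    rw [C.reflVec_single_self] at hv2
    have hvpos := ((C.mem_posF hfin).mp (Finset.mem_of_mem_erase hv)).2 i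
    rw [hv2] at hvpos
    simp [Pi.single_apply] at hvpos
  have hsum : C.uvec hfin (C.r i x)
      = Pi.single i 1 + ∑ v ∈ (C.posF hfin x).erase (Pi.single i 1), C.reflVec i x v := by
    rw [uvec, hstep, Finset.sum_insert hnotmem,
      Finset.sum_image (fun a _ b _ h => C.reflVec_injective i x h)]
  have hlin : ∑ v ∈ (C.posF hfin x).erase (Pi.single i 1), C.reflVec i x v
      = C.reflVec i x (C.uvec hfin x - Pi.single i 1) := by
    have h1 : ∑ v ∈ (C.posF hfin x).erase (Pi.single i 1), C.reflVec i x v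
        = C.reflLin i x (∑ v ∈ (C.posF hfin x).erase (Pi.single i 1), v) := by
      rw [map_sum]
      rfl
    have h2 : ∑ v ∈ (C.posF hfin x).erase (Pi.single i 1), v
        = C.uvec hfin x - Pi.single i 1 := by
      have h3 := Finset.sum_erase_add (C.posF hfin x) (fun v => v)
        (C.single_mem_posF hfin x i)
      rw [uvec]
      exact eq_sub_of_add_eq h3
    rw [h1, h2]
    rfl
  rw [hsum, hlin, C.reflVec_sub, C.reflVec_single_self]
  abel

lemma uvec_r_ne (x : C.X) (i k : I) (hk : k ≠ i) :
    C.uvec hfin (C.r i x) k = C.uvec hfin x k := by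
  rw [C.uvec_step hfin hpm x i]
  simp [Pi.single_apply, hk, C.reflVec_apply]

lemma uvec_r_i (x : C.X) (i : I) :
    C.uvec hfin (C.r i x) i
      = C.uvec hfin x i - (∑ j, C.A x i j * C.uvec hfin x j) + 2 := by
  rw [C.uvec_step hfin hpm x i]
  simp [Pi.single_apply, C.reflVec_apply]
  ring

end U

section Transport

variable (hconn : ∀ Y : Set C.X, Y.Nonempty → (∀ (i : I), ∀ x ∈ Y, C.r i x ∈ Y) →
      Y = Set.univ)

include hconn

lemma transport (x0 : C.X) : ∀ x : C.X, ∃ g : (I → ℤ) →ₗ[ℤ] (I → ℤ),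
    Function.Injective g ∧ ∀ v, C.IsRealRoot x v → C.IsRealRoot x0 (g v) := by
  intro x
  set S : Set C.X := {x | ∃ g : (I → ℤ) →ₗ[ℤ] (I → ℤ),
    Function.Injective g ∧ ∀ v, C.IsRealRoot x v → C.IsRealRoot x0 (g v)} with hS
  have hx0 : x0 ∈ S := ⟨LinearMap.id, fun a b h => h, fun v hv => hv⟩
  have hclosed : ∀ (i : I), ∀ y ∈ S, C.r i y ∈ S := by
    rintro i y ⟨g, hginj, hgroot⟩
    refine ⟨g ∘ₗ C.reflLin i (C.r i y), ?_, ?_⟩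
    · intro a b hab
      exact C.reflVec_injective i (C.r i y) (hginj hab)
    · intro v hv
      exact hgroot _ (C.root_back hv)
  have huniv := hconn S ⟨x0, hx0⟩ hclosed
  have hxS : x ∈ S := by rw [huniv]; trivial
  exact hxS

lemma rootsAll_finite (hfin0 : ∃ x0 : C.X, {v : I → ℤ | C.IsRealRoot x0 v}.Finite) :
    {v : I → ℤ | ∃ x : C.X, C.IsRealRoot x v}.Finite := by
  obtain ⟨x0, hfin⟩ := hfin0
  set R0 : Set (I → ℤ) := {v | C.IsRealRoot x0 v} with hR0
  set F : ((I → (I → ℤ)) × (I → ℤ)) → (I → ℤ) :=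
    fun ρw => Classical.epsilon (fun v => ∑ k, v k • ρw.1 k = ρw.2) with hF
  have hsub : {v : I → ℤ | ∃ x : C.X, C.IsRealRoot x v}
      ⊆ F '' ((Set.univ.pi (fun _ : I => R0)) ×ˢ R0) := by
    rintro v ⟨x, hx⟩
    obtain ⟨g, hginj, hgroot⟩ := C.transport hconn x0 x
    set ρ : I → (I → ℤ) := fun k => g (Pi.single k 1) with hρ
    have hexp : ∀ w : I → ℤ, g w = ∑ k, w k • ρ k := by
      intro w
      have hw : w = ∑ k, w k • (Pi.single k (1:ℤ) : I → ℤ) := by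
        funext m
        rw [Finset.sum_apply]
        have : ∀ k, (w k • (Pi.single k (1:ℤ) : I → ℤ)) m
            = if m = k then w k else 0 := by
          intro k
          simp [Pi.single_apply]
        rw [Finset.sum_congr rfl (fun k _ => this k), Finset.sum_ite_eq]
        simp
      conv_lhs => rw [hw]
      rw [map_sum]
      exact Finset.sum_congr rfl (fun k _ => by rw [map_smul])
    refine ⟨⟨ρ, g v⟩, ⟨?_, ?_⟩, ?_⟩
    · intro k _
      exact hgroot _ (IsRealRoot.basis x k)
    · exact hgroot v hx
    · have hpred : ∑ k, v k • ρ k = g v := (hexp v).symm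
      have hspec := Classical.epsilon_spec (p := fun w => ∑ k, w k • ρ k = g v) ⟨v, hpred⟩
      have huniq : Classical.epsilon (fun w => ∑ k, w k • ρ k = g v) = v := by
        apply hginj
        rw [hexp]
        exact hspec
      exact huniq
  apply Set.Finite.subset _ hsub
  apply Set.Finite.image
  apply Set.Finite.prod
  · exact Set.Finite.pi (fun _ => hfin)
  · exact hfin

end Transport

/-- Kac's criterion via M-matrix theory: an indecomposable generalized Cartan
matrix admitting a positive vector `u` with `M u > 0` is of finite type. -/
lemma kacFin (M : Matrix I I ℤ)
    (hdiag : ∀ i, M i i = 2) (hoff : ∀ i j, i ≠ j → M i j ≤ 0)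
    (hindec : IsIndecMatrix M) (u : I → ℤ) (hu : ∀ i, 1 ≤ u i)
    (hMu : ∀ i, 2 ≤ ∑ j, M i j * u j) : IsFiniteType M := by
  set M' : Matrix I I ℝ := M.map (Int.cast : ℤ → ℝ) with hM'
  set u' : I → ℝ := fun i => (u i : ℝ) with hu'
  have hu'pos : ∀ i, 0 < u' i := by
    intro i
    have := hu i
    rw [hu']
    push_cast
    exact_mod_cast by omega
  have hmul : ∀ (v : I → ℝ) (i : I), M'.mulVec v i = ∑ j, (M i j : ℝ) * v j := by
    intro v i
    simp [Matrix.mulVec, dotProduct, Matrix.map_apply, hM']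
  have hMu' : ∀ i, 0 < M'.mulVec u' i := by
    intro i
    rw [hmul]
    have : (∑ j, (M i j : ℝ) * u' j) = ((∑ j, M i j * u j : ℤ) : ℝ) := by
      push_cast
      rfl
    rw [this]
    exact_mod_cast lt_of_lt_of_le (by norm_num) (hMu i)
  -- Step 1 : M' v ≥ 0 implies v ≥ 0
  have L1 : ∀ v : I → ℝ, (∀ i, 0 ≤ M'.mulVec v i) → ∀ i, 0 ≤ v i := by
    intro v hv
    by_contra hcon
    push_neg at hcon
    obtain ⟨j, hj⟩ := hcon
    obtain ⟨k, _, hk⟩ := Finset.exists_min_image Finset.univ (fun i => v i / u' i)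
      ⟨j, Finset.mem_univ j⟩
    set t := v k / u' k with ht
    have htneg : t < 0 :=
      lt_of_le_of_lt (hk j (Finset.mem_univ j)) (div_neg_of_neg_of_pos hj (hu'pos j))
    set w : I → ℝ := v - t • u' with hw
    have hwpos : ∀ i, 0 ≤ w i := by
      intro i
      have h1 : t ≤ v i / u' i := hk i (Finset.mem_univ i)
      have h2 : t * u' i ≤ v i := (le_div_iff₀ (hu'pos i)).mp h1
      simp [hw]
      linarith
    have hwk : w k = 0 := by
      simp [hw, ht]
      rw [div_mul_cancel₀]
      · ring
      · exact ne_of_gt (hu'pos k)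
    have hpos : 0 < M'.mulVec w k := by
      rw [hw, Matrix.mulVec_sub]
      have : M'.mulVec (t • u') = t • M'.mulVec u' := by
        rw [Matrix.mulVec_smul]
      rw [this]
      simp only [Pi.sub_apply, Pi.smul_apply, smul_eq_mul]
      have := hv k
      nlinarith [hMu' k]
    have hneg : M'.mulVec w k ≤ 0 := by
      rw [hmul]
      have hsplit : ∑ j, (M k j : ℝ) * w j
          = (M k k : ℝ) * w k + ∑ j ∈ Finset.univ.erase k, (M k j : ℝ) * w j :=
        (Finset.add_sum_erase Finset.univ (fun j => (M k j : ℝ) * w j)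
          (Finset.mem_univ k)).symm
      rw [hsplit, hwk, mul_zero, zero_add]
      apply Finset.sum_nonpos
      intro j hjmem
      have hjk : j ≠ k := (Finset.mem_erase.mp hjmem).1
      have hM : (M k j : ℝ) ≤ 0 := by exact_mod_cast hoff k j (fun hh => hjk hh.symm)
      exact mul_nonpos_of_nonpos_of_nonneg hM (hwpos j)
    linarith
  refine ⟨?_, ⟨u', hu'pos, hMu'⟩, ?_⟩
  · -- determinant nonzero
    intro hdet
    obtain ⟨v, hvne, hveq⟩ := (Matrix.exists_mulVec_eq_zero_iff).mpr hdet
    have h1 := L1 v (by intro i; rw [hveq]; simp)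
    have h2 := L1 (-v) (by
      intro i
      rw [Matrix.mulVec_neg, hveq]
      simp)
    apply hvne
    funext i
    have := h2 i
    simp at this
    exact le_antisymm this (h1 i)
  · -- third condition
    intro v hv
    have hv0 := L1 v hv
    by_cases hz : v = 0
    · exact Or.inr hz
    · left
      by_contra hcon
      push_neg at hcon
      obtain ⟨i0, hi0⟩ := hcon
      have hi0' : v i0 = 0 := le_antisymm hi0 (hv0 i0)
      set Z : Set I := {i | v i = 0} with hZ
      have hZc : Zᶜ.Nonempty := by
        by_contra hh
        rw [Set.not_nonempty_iff_eq_empty] at hh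
        apply hz
        funext m
        have : m ∉ Zᶜ := by rw [hh]; exact Set.notMem_empty m
        have : v m = 0 := by
          by_contra hm
          exact this hm
        simpa using this
      apply hindec
      refine ⟨Z, ⟨i0, hi0'⟩, hZc, ?_⟩
      intro a ha b hb
      have hab : a ≠ b := by
        intro hh
        subst hh
        exact hb ha
      have hva : v a = 0 := ha
      have hkey : 0 ≤ ∑ j ∈ Finset.univ.erase a, (M a j : ℝ) * v j := by
        have h1 := hv a
        rw [hmul] at h1
        have hsplit : ∑ j, (M a j : ℝ) * v j
            = (M a a : ℝ) * v a + ∑ j ∈ Finset.univ.erase a, (M a j : ℝ) * v j :=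
          (Finset.add_sum_erase Finset.univ (fun j => (M a j : ℝ) * v j)
            (Finset.mem_univ a)).symm
        rw [hsplit, hva, mul_zero, zero_add] at h1
        exact h1
      have hterms : ∀ j ∈ Finset.univ.erase a, (M a j : ℝ) * v j ≤ 0 := by
        intro j hjmem
        have hja : j ≠ a := (Finset.mem_erase.mp hjmem).1
        have hM : (M a j : ℝ) ≤ 0 := by exact_mod_cast hoff a j (fun hh => hja hh.symm)
        exact mul_nonpos_of_nonpos_of_nonneg hM (hv0 j)
      have hzero := (Finset.sum_eq_zero_iff_of_nonpos hterms).mp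
        (le_antisymm (Finset.sum_nonpos hterms) hkey)
      have hb' : (M a b : ℝ) * v b = 0 := hzero b (Finset.mem_erase.mpr ⟨fun hh => hab hh.symm, Finset.mem_univ b⟩)
      have hvb : 0 < v b := lt_of_le_of_ne (hv0 b) (fun hh => hb hh.symm)
      have : (M a b : ℝ) = 0 := by
        rcases mul_eq_zero.mp hb' with h | h
        · exact h
        · exact absurd h (ne_of_gt hvb)
      exact_mod_cast this

end SemiCartanGraph

/-- Theorem `thm:finitetype`: every connected indecomposable finite Cartan
graph has a point whose Cartan matrix is of finite type.  The hypotheses are: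
all sets of real roots are finite; every real root is positive or negative and
the exchange condition holds (so `C` is a Cartan graph); `C` is connected; and
some point has an indecomposable Cartan matrix. -/
theorem stmt_12 {I : Type*} [Fintype I] [DecidableEq I] (C : SemiCartanGraph I)
    (hfin : ∀ x : C.X, {v : I → ℤ | C.IsRealRoot x v}.Finite)
    (hpm : ∀ (x : C.X) (v : I → ℤ), C.IsRealRoot x v →
      (∀ i, 0 ≤ v i) ∨ (∀ i, v i ≤ 0))
    (hexch : ∀ (x : C.X) (i j : I), i ≠ j →
      (fun y => C.r i (C.r j y))^[
        ({v : I → ℤ | C.IsRealRoot x v ∧ (∀ k, 0 ≤ v k) ∧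
          ∀ k, k ≠ i → k ≠ j → v k = 0}).ncard] x = x)
    (hconn : ∀ Y : Set C.X, Y.Nonempty → (∀ (i : I), ∀ x ∈ Y, C.r i x ∈ Y) →
      Y = Set.univ)
    (hind : ∃ x : C.X, SemiCartanGraph.IsIndecMatrix (C.A x)) :
    ∃ x : C.X, SemiCartanGraph.IsFiniteType (C.A x) := by
  classical
  obtain ⟨x1, hx1⟩ := hind
  have hindall : ∀ x : C.X, SemiCartanGraph.IsIndecMatrix (C.A x) := by
    set S : Set C.X := {x | SemiCartanGraph.IsIndecMatrix (C.A x)} with hS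
    have hclosed : ∀ (i : I), ∀ x ∈ S, C.r i x ∈ S := by
      intro i x hx
      intro hdec
      obtain ⟨s, hs1, hs2, hzero⟩ := hdec
      apply hx
      refine ⟨s, hs1, hs2, ?_⟩
      intro p hp q hq
      have h0 : ∀ p ∈ s, ∀ q, q ∉ s → C.A (C.r i x) p q = 0 :=
        fun p hp q hq => hzero p hp q hq
      have h1 := SemiCartanGraph.split_invariant (C := C) hpm (x := C.r i x) s h0 i p hp q hq
      rwa [C.r_invol] at h1
    intro x
    have huniv := hconn S ⟨x1, hx1⟩ hclosed
    have : x ∈ S := by rw [huniv]; trivial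
    exact this
  have hRA : {v : I → ℤ | ∃ x, C.IsRealRoot x v}.Finite :=
    C.rootsAll_finite hconn ⟨x1, hfin x1⟩
  set F : Finset (I → ℤ) := hRA.toFinset with hF
  set N : C.X → ℤ := fun x => ∑ k, C.uvec hfin x k with hN
  have hsubF : ∀ x, C.posF hfin x ⊆ F := by
    intro x v hv
    rw [hF, Set.Finite.mem_toFinset]
    exact ⟨x, ((C.mem_posF hfin).mp hv).1⟩
  set Tfin : Finset ℤ := F.powerset.image (fun t => ∑ k, (∑ v ∈ t, v) k) with hT
  have hmemT : ∀ x, N x ∈ Tfin := by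
    intro x
    rw [hT]
    apply Finset.mem_image.mpr
    exact ⟨C.posF hfin x, Finset.mem_powerset.mpr (hsubF x), rfl⟩
  set S' : Finset ℤ := Tfin.filter (fun n => ∃ x, N x = n) with hS'
  have hS'ne : S'.Nonempty := ⟨N x1, Finset.mem_filter.mpr ⟨hmemT x1, ⟨x1, rfl⟩⟩⟩
  obtain ⟨xstar, hxstar⟩ : ∃ x : C.X, ∀ y : C.X, N y ≤ N x := by
    obtain ⟨x, hx⟩ := (Finset.mem_filter.mp (S'.max'_mem hS'ne)).2
    refine ⟨x, fun y => ?_⟩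
    rw [hx]
    exact Finset.le_max' _ _ (Finset.mem_filter.mpr ⟨hmemT y, ⟨y, rfl⟩⟩)
  refine ⟨xstar, SemiCartanGraph.kacFin _ (fun i => C.diag xstar i)
    (fun i j h => C.offdiag xstar i j h)
    (hindall xstar) (C.uvec hfin xstar) (fun k => C.uvec_pos hfin xstar k) ?_⟩
  intro i
  have hle := hxstar (C.r i xstar)
  have hdiff : N (C.r i xstar) - N xstar
      = C.uvec hfin (C.r i xstar) i - C.uvec hfin xstar i := by
    rw [hN]
    rw [← Finset.sum_sub_distrib]
    rw [Finset.sum_eq_single i]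
    · intro k _ hk
      rw [C.uvec_r_ne hfin hpm xstar i k hk]; ring
    · intro h; exact absurd (Finset.mem_univ i) h
  have hi := C.uvec_r_i hfin hpm xstar i
  linarith
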